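/- Fix b ≥ 2, let a be a fixed point of S_{[c,b]} with a < b^n, and let t be any positive integer. Then t·b^n + a is a fixed point of S_{[c', b]} where c' = c + t·b^n − S_{[0,b]}(t). -/

import Mathlib

/-- The augmented generalized happy function: `c` plus the sum of squares of the base-`b`
digits of `a` (with the convention that it maps `0` to `c`). -/
def S (c b a : ℕ) : ℕ := c + ((Nat.digits b a).map (· ^ 2)).sum

theorem stmt_8 (b c n a t : ℕ) (hb : 2 ≤ b) (ha : 0 < a) (hfix : S c b a = a)
    (han : a < b ^ n) (ht : 0 < t) :
    S (c + t * b ^ n - S 0 b t) b (t * b ^ n + a) = t * b ^ n + a := by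
  have hb1 : 1 < b := hb
  -- length of digits of a is at most n
  have hlen : (Nat.digits b a).length ≤ n := by
    rw [Nat.digits_len b a hb1 ha.ne']
    have := (Nat.log_lt_iff_lt_pow hb1 ha.ne').mpr han
    omega
  set k := n - (Nat.digits b a).length with hk
  have hkn : (Nat.digits b a).length + k = n := by omega
  -- digits decomposition
  have hdig : Nat.digits b (t * b ^ n + a) =
      Nat.digits b a ++ List.replicate k 0 ++ Nat.digits b t := by
    rw [Nat.digits_append_zeroes_append_digits hb1 ht, hkn]
    ring_nf
  -- sum of squares of digits of t is at most t * b ^ n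
  have hn1 : 1 ≤ n := by
    by_contra h
    push_neg at h
    interval_cases n
    have : n = 0 := by omega
    subst this
    simp at han
    omega
  have hSt : ((Nat.digits b t).map (· ^ 2)).sum ≤ t * b ^ n := by
    calc ((Nat.digits b t).map (· ^ 2)).sum ≤ ((Nat.digits b t).map (· * b)).sum := by
          apply List.sum_le_sum
          intro d' hd'
          have : d' < b := Nat.digits_lt_base hb1 hd'
          calc d' ^ 2 = d' * d' := sq d'
          _ ≤ d' * b := Nat.mul_le_mul_left d' this.le
      _ = (Nat.digits b t).sum * b := by
          simpa using List.sum_map_mul_right (Nat.digits b t) id b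
      _ ≤ t * b := Nat.mul_le_mul_right b (Nat.digit_sum_le b t)
      _ ≤ t * b ^ n := Nat.mul_le_mul_left t (Nat.le_self_pow (by omega) b)
  have hfix' : c + ((Nat.digits b a).map (· ^ 2)).sum = a := hfix
  simp only [S, hdig, List.map_append, List.sum_append, List.map_replicate]
  simp only [S, zero_add] at *
  have : (List.replicate k (0 ^ 2)).sum = 0 := by simp
  omega
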